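/- Let G be a metrizable topological group admitting a compatible complete left-invariant metric. Then G is Roelcke-precompact (for every neighborhood U of the identity there is a finite F ⊆ G with G = UFU) if and only if G is compact. -/

import Mathlib

open scoped Topology

/-- a metrizable topological group with a compatible complete left-invariant
metric is Roelcke-precompact (for every neighborhood `U` of `1` there is a finite `F` with
`G = U F U`) iff it is compact. -/
theorem stmt_15 {G : Type*} [Group G] [TopologicalSpace G] [IsTopologicalGroup G]
    (dL : G → G → ℝ)
    (hsymm : ∀ x y, dL x y = dL y x)
    (hzero : ∀ x y, dL x y = 0 ↔ x = y)
    (htri : ∀ x y z, dL x z ≤ dL x y + dL y z)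
    (hinv : ∀ g x y, dL (g * x) (g * y) = dL x y)
    (hcompat : ∀ (x : G) (s : Set G), s ∈ 𝓝 x ↔ ∃ ε > (0:ℝ), {y | dL x y < ε} ⊆ s)
    (hcomplete : ∀ u : ℕ → G,
      (∀ ε > (0:ℝ), ∃ N, ∀ m ≥ N, ∀ n ≥ N, dL (u m) (u n) < ε) →
      ∃ x : G, Filter.Tendsto (fun n => dL (u n) x) Filter.atTop (𝓝 0)) :
    (∀ U ∈ 𝓝 (1 : G), ∃ F : Finset G, ∀ g : G,
        ∃ u ∈ U, ∃ f ∈ F, ∃ v ∈ U, g = u * f * v) ↔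
      CompactSpace G := by
  have hself : ∀ x : G, dL x x = 0 := fun x => (hzero x x).mpr rfl
  constructor
  · intro hR
    -- basic facts about the left-invariant norm
    have htrans : ∀ (c : G) (b : G), dL c (c * b) = dL 1 b := by
      intro c b
      have := hinv c 1 b
      rwa [mul_one] at this
    have hnorm_mul : ∀ a b : G, dL 1 (a * b) ≤ dL 1 a + dL 1 b := by
      intro a b
      calc dL 1 (a * b) ≤ dL 1 a + dL a (a * b) := htri _ _ _
        _ = dL 1 a + dL 1 b := by rw [htrans]
    have hninv : ∀ a : G, dL 1 a⁻¹ = dL 1 a := by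
      intro a
      have h := hinv a 1 a⁻¹
      rw [mul_one, mul_inv_cancel] at h
      rw [← h, hsymm]
    -- every sequence has a convergent subsequence
    have seq : ∀ u : ℕ → G, ∃ x : G, ∃ φ : ℕ → ℕ, StrictMono φ ∧
        Filter.Tendsto (u ∘ φ) Filter.atTop (𝓝 x) := by
      intro u
      -- one refinement step using Roelcke precompactness
      have step : ∀ ε : ℝ, 0 < ε → ∀ S : Set ℕ, S.Infinite →
          ∃ T : Set ℕ, T ⊆ S ∧ T.Infinite ∧
            ∀ m ∈ T, ∀ n ∈ T, ∃ a b : G, dL 1 a < ε ∧ dL 1 b < ε ∧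
              u n = a * u m * b := by
        intro ε hε S hS
        have hU : {y : G | dL 1 y < ε / 2} ∈ 𝓝 (1 : G) := by
          rw [hcompat]
          exact ⟨ε / 2, by positivity, fun y hy => hy⟩
        obtain ⟨F, hF⟩ := hR _ hU
        choose a ha f hf b hb hg using hF
        have hpig : ∃ c ∈ F, {n | n ∈ S ∧ f (u n) = c}.Infinite := by
          by_contra h
          push_neg at h
          apply hS
          have hsub : S ⊆ ⋃ c ∈ F, {n | n ∈ S ∧ f (u n) = c} := by
            intro n hn
            exact Set.mem_biUnion (hf (u n)) ⟨hn, rfl⟩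
          exact Set.Finite.subset
            (Set.Finite.biUnion F.finite_toSet
              (fun c hc => h c hc)) hsub
        obtain ⟨c, _, hT⟩ := hpig
        refine ⟨{n | n ∈ S ∧ f (u n) = c}, fun n hn => hn.1, hT, ?_⟩
        intro m hm n hn
        have h1 : u m = a (u m) * c * b (u m) := by rw [← hm.2]; exact hg (u m)
        have h2 : u n = a (u n) * c * b (u n) := by rw [← hn.2]; exact hg (u n)
        refine ⟨a (u n) * (a (u m))⁻¹, (b (u m))⁻¹ * b (u n), ?_, ?_, ?_⟩
        · calc dL 1 (a (u n) * (a (u m))⁻¹)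
              ≤ dL 1 (a (u n)) + dL 1 (a (u m))⁻¹ := hnorm_mul _ _
            _ < ε := by
              rw [hninv]
              have h3 := ha (u n); have h4 := ha (u m); dsimp at h3 h4; linarith
        · calc dL 1 ((b (u m))⁻¹ * b (u n))
              ≤ dL 1 (b (u m))⁻¹ + dL 1 (b (u n)) := hnorm_mul _ _
            _ < ε := by
              rw [hninv]
              have h3 := hb (u n); have h4 := hb (u m); dsimp at h3 h4; linarith
        · calc u n = a (u n) * c * b (u n) := h2
            _ = a (u n) * (a (u m))⁻¹ * (a (u m) * c * b (u m)) *
                ((b (u m))⁻¹ * b (u n)) := by group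
            _ = a (u n) * (a (u m))⁻¹ * u m * ((b (u m))⁻¹ * b (u n)) := by
              rw [← h1]
      -- iterate the refinement
      have hex : ∀ (k : ℕ) (S : Set ℕ), S.Infinite → ∃ T : Set ℕ, T ⊆ S ∧ T.Infinite ∧
          ∀ m ∈ T, ∀ n ∈ T, ∃ a b : G, dL 1 a < (1/2 : ℝ)^k ∧ dL 1 b < (1/2 : ℝ)^k ∧
            u n = a * u m * b :=
        fun k S hS => step _ (by positivity) S hS
      choose Tf hTsub hTinf hTgood using hex
      let T : ℕ → {S : Set ℕ // S.Infinite} := fun k => Nat.rec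
        ⟨Tf 0 Set.univ Set.infinite_univ, hTinf 0 Set.univ Set.infinite_univ⟩
        (fun k ih => ⟨Tf (k+1) ih.1 ih.2, hTinf (k+1) ih.1 ih.2⟩) k
      have hTgood' : ∀ k, ∀ m ∈ (T k).1, ∀ n ∈ (T k).1,
          ∃ a b : G, dL 1 a < (1/2 : ℝ)^k ∧ dL 1 b < (1/2 : ℝ)^k ∧ u n = a * u m * b := by
        intro k
        cases k with
        | zero => exact hTgood 0 Set.univ Set.infinite_univ
        | succ k => exact hTgood (k+1) (T k).1 (T k).2
      have hTsub' : ∀ k, (T (k+1)).1 ⊆ (T k).1 := fun k =>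
        hTsub (k+1) (T k).1 (T k).2
      -- choose a strictly increasing sequence of indices
      have hchoice : ∀ (k j : ℕ), ∃ j', j' ∈ (T (k+1)).1 ∧ j < j' := by
        intro k j
        obtain ⟨j', hj', hlt⟩ := (T (k+1)).2.exists_gt j
        exact ⟨j', hj', hlt⟩
      choose nx hnx1 hnx2 using hchoice
      have h0 : ∃ j, j ∈ (T 0).1 := (T 0).2.nonempty
      let idx : ℕ → ℕ := fun k => Nat.rec h0.choose (fun k j => nx k j) k
      have hidx_mem : ∀ k, idx k ∈ (T k).1 := by
        intro k
        cases k with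
        | zero => exact h0.choose_spec
        | succ k => exact hnx1 k (idx k)
      have hidx_mono : StrictMono idx :=
        strictMono_nat_of_lt_succ (fun k => hnx2 k (idx k))
      -- the relation between consecutive terms of the subsequence
      have hrel : ∀ k, ∃ a b : G, dL 1 a < (1/2 : ℝ)^k ∧ dL 1 b < (1/2 : ℝ)^k ∧
          u (idx (k+1)) = a * u (idx k) * b :=
        fun k => hTgood' k _ (hidx_mem k) _ (hTsub' k (hidx_mem (k+1)))
      choose α β hα hβ hαβ using hrel
      -- partial products
      let A : ℕ → G := fun k => Nat.rec 1 (fun k Ak => Ak * (α k)⁻¹) k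
      let B : ℕ → G := fun k => Nat.rec 1 (fun k Bk => Bk * β k) k
      have hAsucc : ∀ k, A (k+1) = A k * (α k)⁻¹ := fun k => rfl
      have hBsucc : ∀ k, B (k+1) = B k * β k := fun k => rfl
      have hgAB : ∀ k, u (idx k) = (A k)⁻¹ * u (idx 0) * B k := by
        intro k
        induction k with
        | zero => simp [A, B]
        | succ k ih =>
          rw [hαβ k, ih, hAsucc k, hBsucc k]
          group
      -- Cauchy estimate for the partial products
      have cauchyAux : ∀ (C : ℕ → G) (w : ℕ → G), (∀ k, C (k+1) = C k * w k) →
          (∀ k, dL 1 (w k) ≤ (1/2 : ℝ)^k) →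
          ∀ m n, m ≤ n → dL (C m) (C n) ≤ 2*(1/2 : ℝ)^m - 2*(1/2 : ℝ)^n := by
        intro C w hC hw m n hmn
        induction n, hmn using Nat.le_induction with
        | base => rw [hself]; ring_nf; exact le_refl _
        | succ n hmn ih =>
          have h1 : dL (C n) (C (n+1)) = dL 1 (w n) := by
            rw [hC n, htrans]
          calc dL (C m) (C (n+1)) ≤ dL (C m) (C n) + dL (C n) (C (n+1)) := htri _ _ _
            _ ≤ (2*(1/2 : ℝ)^m - 2*(1/2 : ℝ)^n) + (1/2 : ℝ)^n := by
                rw [h1]; exact add_le_add ih (hw n)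
            _ = 2*(1/2 : ℝ)^m - 2*(1/2 : ℝ)^(n+1) := by rw [pow_succ]; ring
      -- a sequence satisfying the estimate converges
      have cauchy : ∀ C : ℕ → G,
          (∀ m n, m ≤ n → dL (C m) (C n) ≤ 2*(1/2 : ℝ)^m - 2*(1/2 : ℝ)^n) →
          ∃ x, Filter.Tendsto (fun k => dL (C k) x) Filter.atTop (𝓝 0) := by
        intro C hC
        apply hcomplete
        intro ε hε
        obtain ⟨N, hN⟩ := exists_pow_lt_of_lt_one (show (0:ℝ) < ε/2 by linarith)
          (show (1/2 : ℝ) < 1 by norm_num)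
        refine ⟨N, fun m hm n hn => ?_⟩
        have hbound : ∀ p q : ℕ, N ≤ p → p ≤ q → dL (C p) (C q) < ε := by
          intro p q hp hpq
          have h1 : dL (C p) (C q) ≤ 2*(1/2 : ℝ)^p - 2*(1/2 : ℝ)^q := hC p q hpq
          have h2 : (1/2 : ℝ)^p ≤ (1/2 : ℝ)^N :=
            pow_le_pow_of_le_one (by norm_num) (by norm_num) hp
          have h3 : (0:ℝ) < (1/2 : ℝ)^q := by positivity
          linarith
        rcases le_total m n with h | h
        · exact hbound m n hm h
        · rw [hsymm]; exact hbound n m hn h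
      -- metric convergence implies topological convergence
      have tendsG : ∀ (C : ℕ → G) (x : G),
          Filter.Tendsto (fun k => dL (C k) x) Filter.atTop (𝓝 0) →
          Filter.Tendsto C Filter.atTop (𝓝 x) := by
        intro C x h
        rw [Filter.tendsto_def]
        intro s hs
        obtain ⟨ε, hε, hball⟩ := (hcompat x s).1 hs
        have hev : ∀ᶠ k in Filter.atTop, dL (C k) x < ε :=
          h.eventually_lt_const hε
        filter_upwards [hev] with k hk
        exact hball (show dL x (C k) < ε by rwa [hsymm])
      obtain ⟨x, hx⟩ := cauchy B (cauchyAux B β hBsucc (fun k => (hβ k).le))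
      obtain ⟨y, hy⟩ := cauchy A (cauchyAux A (fun k => (α k)⁻¹) hAsucc
        (fun k => by rw [hninv]; exact (hα k).le))
      have hxB : Filter.Tendsto B Filter.atTop (𝓝 x) := tendsG B x hx
      have hyA : Filter.Tendsto A Filter.atTop (𝓝 y) := tendsG A y hy
      refine ⟨y⁻¹ * u (idx 0) * x, idx, hidx_mono, ?_⟩
      have hlim : Filter.Tendsto (fun k => (A k)⁻¹ * u (idx 0) * B k) Filter.atTop
          (𝓝 (y⁻¹ * u (idx 0) * x)) :=
        (hyA.inv.mul tendsto_const_nhds).mul hxB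
      have : (u ∘ idx) = fun k => (A k)⁻¹ * u (idx 0) * B k := funext fun k => hgAB k
      rw [this]
      exact hlim
    -- transfer to compactness via a metric structure
    letI m : PseudoMetricSpace G := PseudoMetricSpace.ofDistTopology dL hself hsymm htri
      (by
        intro s
        rw [isOpen_iff_mem_nhds]
        constructor
        · intro h x hx
          obtain ⟨ε, hε, hball⟩ := (hcompat x s).1 (h x hx)
          exact ⟨ε, hε, fun y hy => hball hy⟩
        · intro h x hx
          obtain ⟨ε, hε, hball⟩ := h x hx
          exact (hcompat x s).2 ⟨ε, hε, fun y hy => hball y hy⟩)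
    haveI : SeqCompactSpace G := ⟨fun x _ => by
      obtain ⟨a, φ, hφ, hl⟩ := seq x
      exact ⟨a, Set.mem_univ a, φ, hφ, hl⟩⟩
    exact compactSpace_iff_seqCompactSpace.mpr this
  · intro hG U hU
    obtain ⟨V, hVU, hVopen, hV1⟩ := mem_nhds_iff.1 hU
    have hcover : (Set.univ : Set G) ⊆ ⋃ g : G, {h : G | h * g⁻¹ ∈ V} := by
      intro g _
      exact Set.mem_iUnion.2 ⟨g, by simp [hV1]⟩
    have hopen : ∀ g : G, IsOpen {h : G | h * g⁻¹ ∈ V} := by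
      intro g
      exact hVopen.preimage (continuous_id.mul continuous_const)
    obtain ⟨F, hF⟩ := isCompact_univ.elim_finite_subcover _ hopen hcover
    refine ⟨F, fun g => ?_⟩
    obtain ⟨f, hfF, hgf⟩ := Set.mem_iUnion₂.1 (hF (Set.mem_univ g))
    exact ⟨g * f⁻¹, hVU hgf, f, hfF, 1, mem_of_mem_nhds hU, by group⟩
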